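/- For every polynomial P ∈ (ℤ/2ℤ)[x], the congruence x·P(x) + (1 + x)·P(x)² + P(x)⁴ ≡ 0 (mod x³ + x⁴) holds in (ℤ/2ℤ)[x]. Equivalently, in the quotient ring R = (ℤ/2ℤ)[x]/(x³ + x⁴), every element u satisfies x̄·u + (1 + x̄)·u² + u⁴ = 0, where x̄ denotes the class of x in R. Consequently s(R) ≤ 4. -/

import Mathlib

open Polynomial

lemma sq_eq_expand (P : Polynomial (ZMod 2)) :
    P ^ 2 = Polynomial.expand (ZMod 2) 2 P := by
  have := Polynomial.map_frobenius_expand (p := 2) P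
  rw [ZMod.frobenius_zmod, Polynomial.map_id] at this
  exact this.symm

lemma key_mem (P : Polynomial (ZMod 2)) :
    X * P + (1 + X) * P ^ 2 + P ^ 4 ∈
      Ideal.span {(X : Polynomial (ZMod 2)) ^ 3 + X ^ 4} := by
  rw [Ideal.mem_span_singleton]
  set f : Polynomial (ZMod 2) := X * P + (1 + X) * P ^ 2 + P ^ 4 with hf
  have hP2 : P ^ 2 = Polynomial.expand (ZMod 2) 2 P := sq_eq_expand P
  have hP4 : P ^ 4 = Polynomial.expand (ZMod 2) 4 P := by
    have : P ^ 4 = (P ^ 2) ^ 2 := by ring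
    rw [this, sq_eq_expand, hP2, Polynomial.expand_expand]
  have hc2 : ∀ n, (P ^ 2).coeff n = if 2 ∣ n then P.coeff (n / 2) else 0 := by
    intro n; rw [hP2, Polynomial.coeff_expand (by norm_num)]
  have hc4 : ∀ n, (P ^ 4).coeff n = if 4 ∣ n then P.coeff (n / 4) else 0 := by
    intro n; rw [hP4, Polynomial.coeff_expand (by norm_num)]
  have hx3 : (X : Polynomial (ZMod 2)) ^ 3 ∣ f := by
    rw [Polynomial.X_pow_dvd_iff]
    intro d hd
    have hXc : ∀ (p : Polynomial (ZMod 2)) (n : ℕ),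
        (X * p).coeff n = if n = 0 then 0 else p.coeff (n - 1) := by
      intro p n
      cases n with
      | zero => simp [Polynomial.coeff_X_mul_zero]
      | succ k => simp [Polynomial.coeff_X_mul]
    have hdist : f = X * P + (P ^ 2 + X * (P ^ 2)) + P ^ 4 := by rw [hf]; ring
    interval_cases d <;>
      simp [hdist, Polynomial.coeff_add, hXc, hc2, hc4, CharTwo.add_self_eq_zero] <;> omega
  have hx1 : ((X : Polynomial (ZMod 2)) + 1) ∣ f := by
    have : (X : Polynomial (ZMod 2)) + 1 = X - C 1 := by
      simp [sub_eq_add_neg, CharTwo.neg_eq]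
    rw [this, Polynomial.dvd_iff_isRoot]
    simp only [Polynomial.IsRoot, hf, Polynomial.eval_add, Polynomial.eval_mul,
      Polynomial.eval_pow, Polynomial.eval_X, Polynomial.eval_one]
    generalize P.eval 1 = a
    revert a; decide
  have hcop : IsCoprime ((X : Polynomial (ZMod 2)) ^ 3) (X + 1) := by
    apply IsCoprime.pow_left
    exact ⟨-1, 1, by ring⟩
  have := hcop.mul_dvd hx3 hx1
  have heq : (X : Polynomial (ZMod 2)) ^ 3 * (X + 1) = X ^ 3 + X ^ 4 := by ring
  rwa [heq] at this

theorem stmt_11 :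
    (∀ P : Polynomial (ZMod 2),
        X * P + (1 + X) * P ^ 2 + P ^ 4 ∈
          Ideal.span {(X : Polynomial (ZMod 2)) ^ 3 + X ^ 4}) ∧
    (∀ u : Polynomial (ZMod 2) ⧸
          Ideal.span {(X : Polynomial (ZMod 2)) ^ 3 + X ^ 4},
        (Ideal.Quotient.mk _ (X : Polynomial (ZMod 2))) * u
          + (1 + Ideal.Quotient.mk _ (X : Polynomial (ZMod 2))) * u ^ 2
          + u ^ 4 = 0) ∧
    sInf {m : ℕ | ∃ p : Polynomial (Polynomial (ZMod 2) ⧸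
          Ideal.span {(X : Polynomial (ZMod 2)) ^ 3 + X ^ 4}),
        p.degree < (m : WithBot ℕ) ∧
        ∀ x : Polynomial (ZMod 2) ⧸
            Ideal.span {(X : Polynomial (ZMod 2)) ^ 3 + X ^ 4},
          p.eval x = x ^ m} ≤ 4 := by
  have h2 : ∀ u : Polynomial (ZMod 2) ⧸
          Ideal.span {(X : Polynomial (ZMod 2)) ^ 3 + X ^ 4},
        (Ideal.Quotient.mk _ (X : Polynomial (ZMod 2))) * u
          + (1 + Ideal.Quotient.mk _ (X : Polynomial (ZMod 2))) * u ^ 2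
          + u ^ 4 = 0 := by
    intro u
    obtain ⟨Q, rfl⟩ := Ideal.Quotient.mk_surjective u
    have : (Ideal.Quotient.mk (Ideal.span {(X : Polynomial (ZMod 2)) ^ 3 + X ^ 4}))
        (X * Q + (1 + X) * Q ^ 2 + Q ^ 4) = 0 := by
      rw [Ideal.Quotient.eq_zero_iff_mem]; exact key_mem Q
    simp only [map_add, map_mul, map_pow, map_one] at this
    exact this
  refine ⟨key_mem, h2, ?_⟩
  have hneg : ∀ v : Polynomial (ZMod 2) ⧸
        Ideal.span {(X : Polynomial (ZMod 2)) ^ 3 + X ^ 4}, -v = v := by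
    intro v
    obtain ⟨Q, rfl⟩ := Ideal.Quotient.mk_surjective v
    rw [← map_neg, CharTwo.neg_eq]
  apply Nat.sInf_le
  refine ⟨C ((Ideal.Quotient.mk _ (X : Polynomial (ZMod 2)))) * X
      + C (1 + Ideal.Quotient.mk _ (X : Polynomial (ZMod 2))) * X ^ 2, ?_, ?_⟩
  · refine lt_of_le_of_lt (Polynomial.degree_add_le _ _) ?_
    rw [max_lt_iff]
    constructor
    · exact lt_of_le_of_lt (Polynomial.degree_C_mul_X_le _) (by norm_num)
    · exact lt_of_le_of_lt (Polynomial.degree_C_mul_X_pow_le 2 _) (by norm_num)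
  · intro x
    have h := h2 x
    have := eq_neg_of_add_eq_zero_right h
    rw [hneg] at this
    simp only [Polynomial.eval_add, Polynomial.eval_mul, Polynomial.eval_pow,
      Polynomial.eval_C, Polynomial.eval_X]
    exact this.symm
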